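/- Let G be a torsion-free group with Cyc(G) ≠ 1. Then Cyc(G) = Z(G). Moreover, if Z(G) is divisible, then G is locally cyclic (every finitely generated subgroup is cyclic). -/

import Mathlib

/-- `Cyc(G)`. -/
def cycSet (G : Type*) [Group G] : Set G :=
  {y | ∀ x : G, IsCyclic ↥(Subgroup.closure ({x, y} : Set G))}

open Subgroup

private lemma isCyclic_of_le_zpowers {G : Type*} [Group G] {e : G} {H : Subgroup G}
    (h : H ≤ zpowers e) : IsCyclic H := by
  have hr : H ≤ (zpowersHom G e).range := by
    intro x hx
    obtain ⟨n, hn⟩ := h hx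
    exact ⟨Multiplicative.ofAdd n, hn⟩
  have hmap : Subgroup.map (zpowersHom G e) (Subgroup.comap (zpowersHom G e) H) = H :=
    Subgroup.map_comap_eq_self hr
  have : IsCyclic ↥(Subgroup.map (zpowersHom G e) (Subgroup.comap (zpowersHom G e) H)) :=
    isCyclic_of_surjective _ ((zpowersHom G e).subgroupMap_surjective _)
  rwa [hmap] at this

private lemma exists_pows {G : Type*} [Group G] {x y : G}
    (h : IsCyclic ↥(Subgroup.closure ({x, y} : Set G))) :
    ∃ c ∈ Subgroup.closure ({x, y} : Set G),
      (∃ m : ℤ, c ^ m = x) ∧ (∃ n : ℤ, c ^ n = y) := by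
  obtain ⟨g, hg⟩ := h.exists_generator
  have hx : x ∈ Subgroup.closure ({x, y} : Set G) := subset_closure (by simp)
  have hy : y ∈ Subgroup.closure ({x, y} : Set G) := subset_closure (by simp)
  obtain ⟨m, hm⟩ := hg ⟨x, hx⟩
  obtain ⟨n, hn⟩ := hg ⟨y, hy⟩
  exact ⟨g, g.2, ⟨m, by simpa using congrArg Subtype.val hm⟩,
    ⟨n, by simpa using congrArg Subtype.val hn⟩⟩

private lemma key_rel {G : Type*} [Group G]
    (htf : ∀ a : G, ∀ k : ℤ, k ≠ 0 → a ^ k = 1 → a = 1)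
    {c d : G} (hcd : Commute c d) {k q : ℤ} (hk : k ≠ 0) (hq : q ≠ 0)
    (h : c ^ k = d ^ q) : ∃ e : G, c ∈ zpowers e ∧ d ∈ zpowers e := by
  set g : ℤ := (Int.gcd k q : ℤ) with hgdef
  have hgpos : 0 < Int.gcd k q := Int.gcd_pos_of_ne_zero_left q hk
  have hg : g ≠ 0 := by
    have : (0:ℤ) < g := by rw [hgdef]; exact_mod_cast hgpos
    exact this.ne'
  set k' : ℤ := k / g with hk'def
  set q' : ℤ := q / g with hq'def
  have hkk : k' * g = k := Int.ediv_mul_cancel (Int.gcd_dvd_left k q)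
  have hqq : q' * g = q := Int.ediv_mul_cancel (Int.gcd_dvd_right k q)
  have hk'0 : k' ≠ 0 := fun h0 => hk (by rw [← hkk, h0, zero_mul])
  have hq'0 : q' ≠ 0 := fun h0 => hq (by rw [← hqq, h0, zero_mul])
  have hcop : Int.gcd k' q' = 1 := Int.gcd_div_gcd_div_gcd hgpos
  -- step A : c ^ k' = d ^ q'
  have hcdq : Commute (c ^ k') ((d ^ q')⁻¹) := (hcd.zpow_zpow k' q').inv_right
  have hA : c ^ k' = d ^ q' := by
    have h1 : (c ^ k' * (d ^ q')⁻¹) ^ g = 1 := by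
      rw [hcdq.mul_zpow, ← zpow_mul, inv_zpow, ← zpow_mul, hkk, hqq, h, mul_inv_cancel]
    have := htf _ g hg h1
    rwa [mul_inv_eq_one] at this
  -- Bezout
  set u : ℤ := Int.gcdA k' q' with hu
  set v : ℤ := Int.gcdB k' q' with hv
  have hbez : k' * u + q' * v = 1 := by
    have := Int.gcd_eq_gcd_ab k' q'
    rw [hcop] at this
    exact_mod_cast this.symm
  set e : G := c ^ v * d ^ u with he
  have hcdvu : Commute (c ^ v) (d ^ u) := hcd.zpow_zpow v u
  have h2 : ∀ t : ℤ, d ^ (q' * t) = c ^ (k' * t) := fun t => by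
    rw [zpow_mul, zpow_mul, hA]
  have hec : e ^ q' = c := by
    calc e ^ q' = c ^ (v * q') * d ^ (u * q') := by
          rw [hcdvu.mul_zpow, ← zpow_mul, ← zpow_mul]
      _ = c ^ (v * q') * c ^ (k' * u) := by rw [mul_comm u q', h2 u]
      _ = c ^ (v * q' + k' * u) := (zpow_add c _ _).symm
      _ = c := by rw [show v * q' + k' * u = 1 from by linear_combination hbez, zpow_one]
  have hed : e ^ k' = d := by
    calc e ^ k' = c ^ (v * k') * d ^ (u * k') := by
          rw [hcdvu.mul_zpow, ← zpow_mul, ← zpow_mul]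
      _ = d ^ (q' * v) * d ^ (u * k') := by rw [mul_comm v k', ← h2 v]
      _ = d ^ (q' * v + u * k') := (zpow_add d _ _).symm
      _ = d := by rw [show q' * v + u * k' = 1 from by linear_combination hbez, zpow_one]
  exact ⟨e, ⟨q', hec⟩, ⟨k', hed⟩⟩

private lemma htf_zpow {G : Type*} [Group G]
    (htf : ∀ x : G, x ≠ 1 → ¬ IsOfFinOrder x) :
    ∀ a : G, ∀ k : ℤ, k ≠ 0 → a ^ k = 1 → a = 1 := by
  intro a k hk h1
  by_contra ha
  refine htf a ha (isOfFinOrder_iff_pow_eq_one.mpr ⟨k.natAbs, Int.natAbs_pos.mpr hk, ?_⟩)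
  rcases Int.natAbs_eq k with h | h
  · rw [← zpow_natCast, ← h, h1]
  · rw [← zpow_natCast, show (k.natAbs : ℤ) = -k by omega, zpow_neg, h1, inv_one]

/-- If `G` is torsion-free and `Cyc(G) ≠ 1`, then `Cyc(G) = Z(G)`; moreover if
`Z(G)` is divisible then `G` is locally cyclic. -/
theorem cycSet_eq_center_of_torsionFree {G : Type*} [Group G]
    (htf : ∀ x : G, x ≠ 1 → ¬ IsOfFinOrder x)
    (hne : cycSet G ≠ ({1} : Set G)) :
    cycSet G = (Subgroup.center G : Set G) ∧
    ((∀ a ∈ Subgroup.center G, ∀ n : ℕ, n ≠ 0 → ∃ b ∈ Subgroup.center G, b ^ n = a) →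
      ∀ S : Finset G, IsCyclic ↥(Subgroup.closure (S : Set G))) := by
  have htf' := htf_zpow htf
  -- 1 is always in Cyc(G)
  have hone : (1 : G) ∈ cycSet G := by
    intro x
    refine isCyclic_of_le_zpowers (e := x) ?_
    rw [closure_le]
    rintro z (rfl | rfl)
    · exact mem_zpowers _
    · exact one_mem _
  -- Cyc(G) ⊆ Z(G)
  have hsub : cycSet G ⊆ (Subgroup.center G : Set G) := by
    intro y hy
    rw [SetLike.mem_coe, Subgroup.mem_center_iff]
    intro x
    obtain ⟨c, hcmem, ⟨m, hm⟩, ⟨n, hn⟩⟩ := exists_pows (hy x)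
    rw [← hm, ← hn, ← zpow_add, ← zpow_add, add_comm]
  -- a nontrivial element of Cyc(G)
  obtain ⟨y₀, hy₀, hy₀1⟩ : ∃ y₀ ∈ cycSet G, y₀ ≠ 1 := by
    by_contra hcon
    push_neg at hcon
    exact hne (Set.Subset.antisymm (fun z hz => hcon z hz) (by rintro z rfl; exact hone))
  have hy₀c : y₀ ∈ Subgroup.center G := hsub hy₀
  -- Z(G) ⊆ Cyc(G)
  have hsup : ∀ z ∈ Subgroup.center G, z ∈ cycSet G := by
    intro z hz x
    obtain ⟨c, hcmem, ⟨m, hm⟩, ⟨n, hn⟩⟩ := exists_pows (hy₀ x)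
    obtain ⟨d, hdmem, ⟨p, hp⟩, ⟨n', hn'⟩⟩ := exists_pows (hy₀ z)
    have hn0 : n ≠ 0 := by rintro rfl; exact hy₀1 (by rw [← hn, zpow_zero])
    have hn'0 : n' ≠ 0 := by rintro rfl; exact hy₀1 (by rw [← hn', zpow_zero])
    have hdc : d ∈ Subgroup.center G := by
      have : Subgroup.closure ({z, y₀} : Set G) ≤ Subgroup.center G := by
        rw [closure_le]
        rintro w (rfl | rfl)
        · exact hz
        · exact hy₀c
      exact this hdmem
    have hcd : Commute c d := Subgroup.mem_center_iff.mp hdc c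
    obtain ⟨e, hce, hde⟩ := key_rel htf' hcd hn0 hn'0 (by rw [hn, hn'])
    refine isCyclic_of_le_zpowers (e := e) ?_
    rw [closure_le]
    rintro w (rfl | rfl)
    · exact hm ▸ (zpowers e).zpow_mem hce m
    · exact hp ▸ (zpowers e).zpow_mem hde p
  constructor
  · exact Set.Subset.antisymm hsub (fun z hz => hsup z hz)
  · intro hdiv S
    -- every element is central
    have hcent : ∀ x : G, x ∈ Subgroup.center G := by
      intro x
      obtain ⟨c, hcmem, ⟨m, hm⟩, ⟨n, hn⟩⟩ := exists_pows (hy₀ x)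
      have hn0 : n ≠ 0 := by rintro rfl; exact hy₀1 (by rw [← hn, zpow_zero])
      set N : ℕ := n.natAbs with hN
      have hN0 : N ≠ 0 := Int.natAbs_ne_zero.mpr hn0
      have hcN : c ^ (N : ℤ) ∈ Subgroup.center G := by
        rcases Int.natAbs_eq n with h | h
        · rw [← h, hn]; exact hy₀c
        · have : c ^ (N : ℤ) = y₀⁻¹ := by rw [show (N : ℤ) = -n by omega, zpow_neg, hn]
          rw [this]; exact (Subgroup.center G).inv_mem hy₀c
      obtain ⟨b, hbc, hb⟩ := hdiv (c ^ (N : ℤ)) hcN N hN0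
      have hcb0 : Commute c b := Subgroup.mem_center_iff.mp hbc c
      have hcb : Commute c b⁻¹ := hcb0.inv_right
      have hcb1 : (c * b⁻¹) ^ N = 1 := by
        rw [hcb.mul_pow, inv_pow, hb, ← zpow_natCast, mul_inv_cancel]
      have : c * b⁻¹ = 1 := by
        by_contra hcon
        exact htf _ hcon (isOfFinOrder_iff_pow_eq_one.mpr ⟨N, Nat.pos_of_ne_zero hN0, hcb1⟩)
      have hc : c ∈ Subgroup.center G := by
        rw [mul_inv_eq_one] at this; rw [this]; exact hbc
      rw [← hm]; exact (Subgroup.center G).zpow_mem hc m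
    have hall : ∀ y : G, y ∈ cycSet G := fun y => hsup y (hcent y)
    classical
    induction S using Finset.induction_on with
    | empty =>
        refine isCyclic_of_le_zpowers (e := 1) ?_
        simp
    | @insert a S' hna IH =>
        obtain ⟨c, hSc⟩ : ∃ c : G, Subgroup.closure ((S' : Finset G) : Set G) = zpowers c := by
          obtain ⟨g, hg⟩ := IH.exists_generator
          refine ⟨(g : G), le_antisymm ?_ (zpowers_le.mpr g.2)⟩
          intro w hw
          obtain ⟨t, ht⟩ := hg ⟨w, hw⟩
          exact ⟨t, by simpa using congrArg Subtype.val ht⟩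
        have hins : Subgroup.closure ((insert a S' : Finset G) : Set G)
            = Subgroup.closure ({a, c} : Set G) := by
          have hSc' : Subgroup.closure ((S' : Finset G) : Set G)
              = Subgroup.closure ({c} : Set G) := by rw [hSc, zpowers_eq_closure]
          rw [Finset.coe_insert, show (insert a (S' : Set G)) = {a} ∪ (S' : Set G) from rfl,
            Subgroup.closure_union, hSc',
            show ({a, c} : Set G) = {a} ∪ {c} from rfl,
            Subgroup.closure_union]
        rw [hins]
        exact hall c a
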